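/- If f : [a,b] → ℝ is α-Lipschitz, then H¹({(t, f(t)) : t ∈ [a,b]}) = ∫_a^b √(1 + f'(t)²) dt ≤ √(1+α²)·(b−a). -/

import Mathlib

open MeasureTheory Set Real
open scoped ENNReal NNReal

noncomputable section

abbrev Plane := EuclideanSpace ℝ (Fin 2)

def mk2 (a b : ℝ) : Plane := (WithLp.equiv 2 (Fin 2 → ℝ)).symm ![a, b]

/-- Orthogonal projection onto direction (cos θ, sin θ). -/
def proj (θ : ℝ) (x : Plane) : ℝ := x 0 * Real.cos θ + x 1 * Real.sin θ

/-- Favard length. -/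
def Fav (E : Set Plane) : ℝ≥0∞ := ∫⁻ θ in Set.Ioo 0 Real.pi, μH[1] (proj θ '' E)

open Filter intervalIntegral
open scoped Topology

lemma lipDerivBound {K : ℝ≥0} {u : ℝ → ℝ} (hu : LipschitzWith K u) (x : ℝ) :
    |deriv u x| ≤ K := by
  simpa [Real.norm_eq_abs] using
    norm_deriv_le_of_lipschitzOn (𝕜 := ℝ) (univ_mem) (lipschitzOnWith_univ.2 hu) (x₀ := x)

lemma lipDerivIntegrable {K : ℝ≥0} {u : ℝ → ℝ} (hu : LipschitzWith K u) (s t : ℝ) :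
    IntervalIntegrable (deriv u) volume s t := by
  apply IntervalIntegrable.mono_fun' (g := fun _ => (K : ℝ)) intervalIntegrable_const
  · exact (measurable_deriv u).aestronglyMeasurable
  · exact Eventually.of_forall fun x => by
      simpa [Real.norm_eq_abs] using lipDerivBound hu x

lemma lipFTC {K : ℝ≥0} {u : ℝ → ℝ} (hu : LipschitzWith K u) (s t : ℝ) :
    ∫ x in s..t, deriv u x = u t - u s := by
  have hucont : Continuous u := hu.continuous
  have huint : ∀ p q : ℝ, IntervalIntegrable u volume p q := fun p q =>
    hucont.intervalIntegrable p q
  set h : ℕ → ℝ := fun n => ((n : ℝ) + 1)⁻¹ with hh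
  have hpos : ∀ n, 0 < h n := fun n => by positivity
  have hne : ∀ n, h n ≠ 0 := fun n => (hpos n).ne'
  have htend0 : Tendsto h atTop (𝓝[≠] 0) := by
    apply tendsto_nhdsWithin_of_tendsto_nhds_of_eventually_within
    · exact Tendsto.inv_tendsto_atTop
        (tendsto_atTop_add_const_right _ 1 tendsto_natCast_atTop_atTop)
    · exact Eventually.of_forall fun n => hne n
  -- step 1 : DCT
  have step1 : Tendsto (fun n => ∫ x in s..t, (h n)⁻¹ * (u (x + h n) - u x)) atTop
      (𝓝 (∫ x in s..t, deriv u x)) := by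
    apply intervalIntegral.tendsto_integral_filter_of_dominated_convergence (bound := fun _ => (K : ℝ))
    · exact Eventually.of_forall fun n =>
        (Continuous.aestronglyMeasurable (by continuity))
    · refine Eventually.of_forall fun n => Eventually.of_forall fun x _ => ?_
      have : |u (x + h n) - u x| ≤ K * h n := by
        have := hu.dist_le_mul (x + h n) x
        simpa [Real.dist_eq, abs_of_pos (hpos n)] using this
      rw [Real.norm_eq_abs, abs_mul, abs_inv, abs_of_pos (hpos n)]
      rw [inv_mul_le_iff₀ (hpos n)]
      linarith [this]
    · exact intervalIntegrable_const
    · have hae : ∀ᵐ x : ℝ, DifferentiableAt ℝ u x := hu.ae_differentiableAt_real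
      filter_upwards [hae] with x hx _
      have := (hx.hasDerivAt.tendsto_slope_zero).comp htend0
      simpa [Function.comp_def, smul_eq_mul] using this
  -- step 2 : rewrite the integral
  have step2 : ∀ n, (∫ x in s..t, (h n)⁻¹ * (u (x + h n) - u x)) =
      (h n)⁻¹ * (∫ x in t..t + h n, u x) - (h n)⁻¹ * (∫ x in s..s + h n, u x) := by
    intro n
    have e0 : (∫ x in s..t, (h n)⁻¹ * (u (x + h n) - u x))
        = (h n)⁻¹ * ((∫ x in s..t, u (x + h n)) - ∫ x in s..t, u x) := by
      rw [intervalIntegral.integral_const_mul, intervalIntegral.integral_sub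
        (by simpa using huint (s + h n) (t + h n) |>.comp_add_right (h n)) (huint s t)]
    have e1 : (∫ x in s..t, u (x + h n)) = ∫ x in s + h n..t + h n, u x :=
      intervalIntegral.integral_comp_add_right u (h n)
    have a1 : (∫ x in s..s + h n, u x) + (∫ x in s + h n..t + h n, u x)
        = ∫ x in s..t + h n, u x :=
      intervalIntegral.integral_add_adjacent_intervals (huint _ _) (huint _ _)
    have a2 : (∫ x in s..t, u x) + (∫ x in t..t + h n, u x) = ∫ x in s..t + h n, u x :=
      intervalIntegral.integral_add_adjacent_intervals (huint _ _) (huint _ _)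
    rw [e0, e1]
    have e2 : (∫ x in s + h n..t + h n, u x) - (∫ x in s..t, u x)
        = (∫ x in t..t + h n, u x) - ∫ x in s..s + h n, u x := by linarith
    rw [e2, mul_sub]
  -- step 3 : endpoints averages
  have step3 : ∀ c : ℝ, Tendsto (fun n => (h n)⁻¹ * ∫ x in c..c + h n, u x) atTop (𝓝 (u c)) := by
    intro c
    have hG : HasDerivAt (fun v => ∫ x in c..v, u x) (u c) c :=
      intervalIntegral.integral_hasDerivAt_right (huint c c)
        (hucont.stronglyMeasurableAtFilter _ _) hucont.continuousAt
    have := hG.tendsto_slope_zero.comp htend0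
    simpa [Function.comp_def, smul_eq_mul, intervalIntegral.integral_same] using this
  have := ((step3 t).sub (step3 s))
  have step1' : Tendsto (fun n => ∫ x in s..t, (h n)⁻¹ * (u (x + h n) - u x)) atTop
      (𝓝 (u t - u s)) := by
    simpa only [step2] using this
  exact tendsto_nhds_unique step1 step1'
noncomputable section

lemma mk2_apply (p q : ℝ) (i : Fin 2) : mk2 p q i = ![p, q] i := rfl

lemma dist_mk2 (p q p' q' : ℝ) :
    dist (mk2 p q) (mk2 p' q') = Real.sqrt ((p - p') ^ 2 + (q - q') ^ 2) := by
  rw [EuclideanSpace.dist_eq]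
  simp [Fin.sum_univ_two, mk2_apply, Real.dist_eq, sq_abs]

def curveOf (g : ℝ → ℝ) : ℝ → Plane := fun t => mk2 t (g t)

lemma curveOf_inj (g : ℝ → ℝ) : Function.Injective (curveOf g) := by
  intro s t h
  have := congrArg (fun x : Plane => x 0) h
  simpa [curveOf, mk2_apply] using this

lemma dist_curveOf (g : ℝ → ℝ) (s t : ℝ) :
    dist (curveOf g s) (curveOf g t) = Real.sqrt ((s - t) ^ 2 + (g s - g t) ^ 2) :=
  dist_mk2 _ _ _ _

lemma curveOf_lipschitz {K : ℝ≥0} {g : ℝ → ℝ} (hg : LipschitzWith K g) :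
    LipschitzWith (Real.sqrt (1 + (K : ℝ) ^ 2)).toNNReal (curveOf g) := by
  have h1 : (0:ℝ) ≤ Real.sqrt (1 + (K : ℝ) ^ 2) := Real.sqrt_nonneg _
  apply LipschitzWith.of_dist_le_mul
  intro s t
  rw [dist_curveOf, Real.coe_toNNReal _ h1, Real.dist_eq]
  have hgd : |g s - g t| ≤ (K : ℝ) * |s - t| := by
    simpa [Real.dist_eq] using hg.dist_le_mul s t
  have h2 : (g s - g t) ^ 2 ≤ (K : ℝ) ^ 2 * (s - t) ^ 2 := by
    rw [← sq_abs (g s - g t), ← sq_abs (s - t)]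
    calc |g s - g t| ^ 2 ≤ ((K:ℝ) * |s - t|) ^ 2 := by
          apply sq_le_sq' _ hgd
          nlinarith [abs_nonneg (g s - g t), abs_nonneg (s - t), NNReal.coe_nonneg K]
      _ = (K:ℝ)^2 * |s - t| ^ 2 := by ring
  calc Real.sqrt ((s - t) ^ 2 + (g s - g t) ^ 2)
      ≤ Real.sqrt ((1 + (K:ℝ)^2) * (s - t)^2) := by
        apply Real.sqrt_le_sqrt; nlinarith
    _ = Real.sqrt (1 + (K:ℝ)^2) * |s - t| := by
        rw [Real.sqrt_mul (by positivity), Real.sqrt_sq_eq_abs]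

section Curve
variable {K : ℝ≥0} {g : ℝ → ℝ}

lemma phi_measurable (g : ℝ → ℝ) :
    Measurable (fun x => Real.sqrt (1 + deriv g x ^ 2)) :=
  (measurable_const.add ((measurable_deriv g).pow_const 2)).sqrt

lemma one_le_phi (g : ℝ → ℝ) (x : ℝ) : 1 ≤ Real.sqrt (1 + deriv g x ^ 2) := by
  have := Real.sqrt_le_sqrt (show (1:ℝ) ≤ 1 + deriv g x ^ 2 by nlinarith [sq_nonneg (deriv g x)])
  simpa using this

lemma phi_le (hg : LipschitzWith K g) (x : ℝ) :
    Real.sqrt (1 + deriv g x ^ 2) ≤ Real.sqrt (1 + (K:ℝ) ^ 2) := by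
  apply Real.sqrt_le_sqrt
  have := norm_deriv_le_of_lipschitzOn (𝕜 := ℝ) (univ_mem) (lipschitzOnWith_univ.2 hg) (x₀ := x)
  rw [Real.norm_eq_abs] at this
  nlinarith [abs_nonneg (deriv g x), sq_abs (deriv g x)]

lemma phi_integrable (hg : LipschitzWith K g) (s t : ℝ) :
    IntervalIntegrable (fun x => Real.sqrt (1 + deriv g x ^ 2)) volume s t := by
  apply IntervalIntegrable.mono_fun' (g := fun _ => Real.sqrt (1 + (K:ℝ)^2))
    intervalIntegrable_const (phi_measurable g).aestronglyMeasurable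
  exact Eventually.of_forall fun x => by
    simp only [Real.norm_eq_abs, abs_of_nonneg (Real.sqrt_nonneg _)]; exact phi_le hg x

lemma phi_integral_lower (hg : LipschitzWith K g) {s t : ℝ} (hst : s ≤ t) :
    t - s ≤ ∫ x in s..t, Real.sqrt (1 + deriv g x ^ 2) := by
  have := intervalIntegral.integral_mono_on (f := fun _ => (1:ℝ)) hst
    intervalIntegrable_const (phi_integrable hg s t) (fun x _ => one_le_phi g x)
  simpa using this

lemma phi_integral_upper (hg : LipschitzWith K g) {s t : ℝ} (hst : s ≤ t) :
    (∫ x in s..t, Real.sqrt (1 + deriv g x ^ 2)) ≤ Real.sqrt (1 + (K:ℝ)^2) * (t - s) := by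
  have := intervalIntegral.integral_mono_on (g := fun _ => Real.sqrt (1 + (K:ℝ)^2)) hst
    (phi_integrable hg s t) intervalIntegrable_const (fun x _ => phi_le hg x)
  simpa [mul_comm] using this

/-- chord bound -/
lemma chord_bound (hg : LipschitzWith K g) {s t : ℝ} (hst : s ≤ t) :
    dist (curveOf g s) (curveOf g t) ≤ ∫ x in s..t, Real.sqrt (1 + deriv g x ^ 2) := by
  set p := t - s with hp
  set q := g t - g s with hq
  set d := dist (curveOf g s) (curveOf g t) with hd
  have hdf : d = Real.sqrt (p ^ 2 + q ^ 2) := by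
    rw [hd, dist_curveOf]; congr 1; ring
  have hd0 : 0 ≤ d := dist_nonneg
  have hI0 : 0 ≤ ∫ x in s..t, Real.sqrt (1 + deriv g x ^ 2) :=
    le_trans (by linarith) (phi_integral_lower hg hst)
  rcases eq_or_lt_of_le hd0 with h0 | hdpos
  · linarith
  have hqint : q = ∫ x in s..t, deriv g x := by rw [hq, lipFTC hg s t]
  have key : d ^ 2 ≤ d * ∫ x in s..t, Real.sqrt (1 + deriv g x ^ 2) := by
    have e1 : d ^ 2 = p ^ 2 + q ^ 2 := by
      rw [hdf, Real.sq_sqrt (by positivity)]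
    have e2 : (∫ x in s..t, (p + q * deriv g x)) = p ^ 2 + q ^ 2 := by
      rw [intervalIntegral.integral_add intervalIntegrable_const
        ((lipDerivIntegrable hg s t).const_mul q)]
      rw [intervalIntegral.integral_const_mul, ← hqint]
      simp [← hp]; ring
    have e3 : (∫ x in s..t, (p + q * deriv g x))
        ≤ ∫ x in s..t, d * Real.sqrt (1 + deriv g x ^ 2) := by
      apply intervalIntegral.integral_mono_on hst
        (intervalIntegrable_const.add ((lipDerivIntegrable hg s t).const_mul q))
        ((phi_integrable hg s t).const_mul d)
      intro x _
      set r := deriv g x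
      have h4 : (p + q * r) ^ 2 ≤ (p ^ 2 + q ^ 2) * (1 + r ^ 2) := by nlinarith [sq_nonneg (p * r - q)]
      have h5 : p + q * r ≤ Real.sqrt ((p ^ 2 + q ^ 2) * (1 + r ^ 2)) := by
        calc p + q * r ≤ |p + q * r| := le_abs_self _
          _ = Real.sqrt ((p + q * r) ^ 2) := by rw [Real.sqrt_sq_eq_abs]
          _ ≤ _ := Real.sqrt_le_sqrt h4
      calc p + q * r ≤ Real.sqrt ((p ^ 2 + q ^ 2) * (1 + r ^ 2)) := h5
        _ = d * Real.sqrt (1 + r ^ 2) := by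
            rw [Real.sqrt_mul (by positivity), hdf]
    rw [e1, ← e2]
    calc (∫ x in s..t, (p + q * deriv g x)) ≤ _ := e3
      _ = d * ∫ x in s..t, Real.sqrt (1 + deriv g x ^ 2) := by
          rw [intervalIntegral.integral_const_mul]
  nlinarith [key]

end Curve

section Curve2
variable {K : ℝ≥0} {g : ℝ → ℝ}

lemma curve_measure_le (hg : LipschitzWith K g) {a b : ℝ} (hab : a ≤ b) :
    μH[1] (curveOf g '' Icc a b)
      ≤ ENNReal.ofReal (∫ x in a..b, Real.sqrt (1 + deriv g x ^ 2)) := by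
  classical
  set φ := fun x : ℝ => Real.sqrt (1 + deriv g x ^ 2) with hφ
  set σ := fun u : ℝ => ∫ x in a..u, φ x with hσdef
  have hdiff : ∀ x y : ℝ, σ y - σ x = ∫ t in x..y, φ t := by
    intro x y
    have h := intervalIntegral.integral_add_adjacent_intervals
      (phi_integrable hg a x) (phi_integrable hg x y)
    simp only [hσdef, hφ] at h ⊢
    linarith [h]
  have hgap : ∀ x y : ℝ, x ≤ y → y - x ≤ σ y - σ x := by
    intro x y hxy; rw [hdiff]; exact phi_integral_lower hg hxy
  have hchord : ∀ x y : ℝ, dist (curveOf g x) (curveOf g y) ≤ |σ y - σ x| := by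
    intro x y
    rcases le_total x y with h | h
    · have h1 : x - y ≤ σ x - σ y → True := fun _ => trivial
      have h2 := chord_bound hg h
      rw [← hdiff x y] at h2
      exact h2.trans (le_abs_self _)
    · have h2 := chord_bound hg h
      rw [← hdiff y x, dist_comm] at h2
      exact h2.trans (by rw [abs_sub_comm]; exact le_abs_self _)
  have hinj : InjOn σ (Icc a b) := by
    intro x hx y hy hxy
    by_contra hne
    rcases lt_or_gt_of_ne hne with h | h
    · have := hgap x y h.le; rw [hxy] at this; linarith
    · have := hgap y x h.le; rw [hxy] at this; linarith
  set ρ := Function.invFunOn σ (Icc a b) with hρ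
  set ψ := fun u => curveOf g (ρ u) with hψdef
  set S := σ '' Icc a b with hS
  have hρS : ∀ u ∈ S, ρ u ∈ Icc a b ∧ σ (ρ u) = u := by
    rintro u ⟨x, hx, rfl⟩
    exact ⟨Function.invFunOn_mem ⟨x, hx, rfl⟩, Function.invFunOn_eq ⟨x, hx, rfl⟩⟩
  have himg : curveOf g '' Icc a b = ψ '' S := by
    rw [hS, Set.image_image]
    apply (Set.image_congr ?_).symm
    intro x hx
    have h1 := hρS (σ x) ⟨x, hx, rfl⟩
    have h2 : ρ (σ x) = x := hinj h1.1 hx h1.2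
    simp only [hψdef, h2]
  have hψlip : LipschitzOnWith 1 ψ S := by
    rw [lipschitzOnWith_iff_dist_le_mul]
    intro u hu v hv
    obtain ⟨hu1, hu2⟩ := hρS u hu
    obtain ⟨hv1, hv2⟩ := hρS v hv
    have := hchord (ρ u) (ρ v)
    rw [hu2, hv2] at this
    simpa [hψdef, Real.dist_eq, abs_sub_comm v u] using this
  calc μH[1] (curveOf g '' Icc a b) = μH[1] (ψ '' S) := by rw [himg]
    _ ≤ ((1:ℝ≥0) : ℝ≥0∞) ^ (1:ℝ) * μH[1] S := hψlip.hausdorffMeasure_image_le zero_le_one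
    _ = μH[1] S := by simp
    _ ≤ μH[1] (Icc (σ a) (σ b)) := by
        apply measure_mono
        rintro _ ⟨x, hx, rfl⟩
        exact ⟨by linarith [hgap a x hx.1, hx.1], by linarith [hgap x b hx.2, hx.2]⟩
    _ = ENNReal.ofReal (σ b - σ a) := by rw [hausdorffMeasure_real, Real.volume_Icc]
    _ = ENNReal.ofReal (∫ x in a..b, Real.sqrt (1 + deriv g x ^ 2)) := by rw [hdiff a b]

end Curve2

section Curve3
variable {K : ℝ≥0} {g : ℝ → ℝ}

lemma curve_continuous (hg : LipschitzWith K g) : Continuous (curveOf g) :=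
  (curveOf_lipschitz hg).continuous

lemma piece_lower (hg : LipschitzWith K g) {s t : ℝ} (hst : s ≤ t) :
    ENNReal.ofReal (dist (curveOf g s) (curveOf g t)) ≤ μH[1] (curveOf g '' Icc s t) := by
  set w := curveOf g t - curveOf g s with hw
  rcases eq_or_ne w 0 with hw0 | hw0
  · have : dist (curveOf g s) (curveOf g t) = 0 := by
      rw [dist_eq_norm, ← neg_sub, norm_neg, ← hw, hw0, norm_zero]
    simp [this]
  have hwn : (0:ℝ) < ‖w‖ := norm_pos_iff.2 hw0
  set u : Plane := ‖w‖⁻¹ • w with hu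
  set p : Plane → ℝ := fun x => inner ℝ x u with hp
  have hplip : LipschitzWith 1 p := by
    apply LipschitzWith.of_dist_le_mul
    intro x y
    rw [Real.dist_eq, hp]
    have : (inner ℝ x u : ℝ) - inner ℝ y u = inner ℝ (x - y) u := (inner_sub_left x y u).symm
    rw [this]
    calc |(inner ℝ (x - y) u : ℝ)| ≤ ‖x - y‖ * ‖u‖ := abs_real_inner_le_norm _ _
      _ = ‖x - y‖ := by
          rw [hu, norm_smul, norm_inv, norm_norm, inv_mul_cancel₀ hwn.ne']; ring
      _ = 1 * dist x y := by rw [one_mul, dist_eq_norm]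
  have hpd : p (curveOf g t) - p (curveOf g s) = ‖w‖ := by
    rw [hp]
    have : (inner ℝ (curveOf g t) u : ℝ) - inner ℝ (curveOf g s) u = inner ℝ w u := by
      rw [hw, inner_sub_left]
    rw [this, hu, real_inner_smul_right, real_inner_self_eq_norm_sq, sq]
    field_simp
  set T := (fun x => p (curveOf g x)) '' Icc s t with hT
  have hTconn : IsPreconnected T :=
    (isPreconnected_Icc).image _ (hplip.continuous.comp (curve_continuous hg)).continuousOn
  have hsub : Icc (p (curveOf g s)) (p (curveOf g t)) ⊆ T :=
    hTconn.Icc_subset ⟨s, ⟨le_refl s, hst⟩, rfl⟩ ⟨t, ⟨hst, le_refl t⟩, rfl⟩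
  have hdist : dist (curveOf g s) (curveOf g t) = ‖w‖ := by
    rw [dist_eq_norm, ← neg_sub, norm_neg, ← hw]
  calc ENNReal.ofReal (dist (curveOf g s) (curveOf g t))
      = volume (Icc (p (curveOf g s)) (p (curveOf g t))) := by
        rw [Real.volume_Icc, hpd, hdist]
    _ = μH[1] (Icc (p (curveOf g s)) (p (curveOf g t))) := by rw [hausdorffMeasure_real]
    _ ≤ μH[1] T := measure_mono hsub
    _ = μH[1] (p '' (curveOf g '' Icc s t)) := by rw [hT, Set.image_image]
    _ ≤ ((1:ℝ≥0) : ℝ≥0∞) ^ (1:ℝ) * μH[1] (curveOf g '' Icc s t) :=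
        hplip.hausdorffMeasure_image_le zero_le_one _
    _ = μH[1] (curveOf g '' Icc s t) := by simp

lemma piece_upper (hg : LipschitzWith K g) {s t : ℝ} (hst : s ≤ t) :
    μH[1] (curveOf g '' Icc s t) ≤ ENNReal.ofReal (Real.sqrt (1 + (K:ℝ)^2) * (t - s)) := by
  calc μH[1] (curveOf g '' Icc s t)
      ≤ ((Real.sqrt (1 + (K:ℝ)^2)).toNNReal : ℝ≥0∞) ^ (1:ℝ) * μH[1] (Icc s t) :=
        ((curveOf_lipschitz hg).lipschitzOnWith (s := Icc s t)).hausdorffMeasure_image_le zero_le_one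
    _ = ((Real.sqrt (1 + (K:ℝ)^2)).toNNReal : ℝ≥0∞) * ENNReal.ofReal (t - s) := by
        rw [ENNReal.rpow_one, hausdorffMeasure_real, Real.volume_Icc]
    _ = ENNReal.ofReal (Real.sqrt (1 + (K:ℝ)^2) * (t - s)) := by
        rw [ENNReal.ofReal_mul (Real.sqrt_nonneg _)]
        rfl

lemma piece_ne_top (hg : LipschitzWith K g) {s t : ℝ} (hst : s ≤ t) :
    μH[1] (curveOf g '' Icc s t) ≠ ⊤ :=
  ((piece_upper hg hst).trans_lt ENNReal.ofReal_lt_top).ne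

lemma hausdorff_singleton_zero (z : Plane) : μH[1] ({z} : Set Plane) = 0 := by
  rcases Measure.hausdorffMeasure_zero_or_top (X := Plane) zero_lt_one {z} with h | h
  · exact h
  · exfalso
    rw [Measure.hausdorffMeasure_zero_singleton] at h
    exact ENNReal.one_ne_top h

lemma curve_additive (hg : LipschitzWith K g) {a s b : ℝ} (h1 : a ≤ s) (h2 : s ≤ b) :
    μH[1] (curveOf g '' Icc a b)
      = μH[1] (curveOf g '' Icc a s) + μH[1] (curveOf g '' Icc s b) := by
  set X := curveOf g '' Icc a s with hX
  set Y := curveOf g '' Icc s b with hY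
  have hXY : curveOf g '' Icc a b = X ∪ Y := by
    rw [hX, hY, ← Set.image_union, Icc_union_Icc_eq_Icc h1 h2]
  have hYc : IsCompact Y := (isCompact_Icc).image (curve_continuous hg)
  have hmeas : MeasurableSet (Y \ {curveOf g s}) :=
    hYc.isClosed.measurableSet.diff (measurableSet_singleton _)
  have hdisj : Disjoint X (Y \ {curveOf g s}) := by
    rw [Set.disjoint_left]
    rintro z ⟨x, hx, rfl⟩ ⟨⟨y, hy, hyz⟩, hz2⟩
    have : y = x := curveOf_inj g hyz
    subst this
    have : y = s := le_antisymm hx.2 hy.1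
    exact hz2 (by rw [this]; exact Set.mem_singleton _)
  have hcup : X ∪ (Y \ {curveOf g s}) = X ∪ Y := by
    apply Set.Subset.antisymm
    · exact Set.union_subset_union_right _ Set.diff_subset
    · apply Set.union_subset Set.subset_union_left
      intro z hz
      by_cases hzs : z = curveOf g s
      · exact Or.inl ⟨s, ⟨h1, le_refl s⟩, hzs.symm⟩
      · exact Or.inr ⟨hz, hzs⟩
  have hnull : μH[1] ({curveOf g s} : Set Plane) = 0 := hausdorff_singleton_zero _
  rw [hXY, ← hcup, measure_union hdisj hmeas, measure_diff_null hnull]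
end Curve3

section Curve4
variable {K : ℝ≥0} {g : ℝ → ℝ}

lemma curve_measure_ge (hg : LipschitzWith K g) {a b : ℝ} (hab : a ≤ b) :
    ENNReal.ofReal (∫ x in a..b, Real.sqrt (1 + deriv g x ^ 2))
      ≤ μH[1] (curveOf g '' Icc a b) := by
  classical
  set c := (Real.sqrt (1 + (K:ℝ)^2)).toNNReal with hc
  have hcge : (c:ℝ) = Real.sqrt (1 + (K:ℝ)^2) := Real.coe_toNNReal _ (Real.sqrt_nonneg _)
  set clamp : ℝ → ℝ := fun t => max (min t b) a with hclampdef
  have hclamplip : LipschitzWith 1 clamp := (LipschitzWith.id.min_const b).max_const a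
  have hclampmem : ∀ t, clamp t ∈ Icc a b := fun t =>
    ⟨le_max_right _ _, max_le ((min_le_right _ _)) hab⟩
  have hclampid : ∀ t ∈ Icc a b, clamp t = t := fun t ht => by
    rw [hclampdef]; dsimp only; rw [min_eq_left ht.2, max_eq_left ht.1]
  set η : ℝ → ℝ := fun t => (μH[1] (curveOf g '' Icc a (clamp t))).toReal with hηdef
  have hηmem : ∀ t, η t = (μH[1] (curveOf g '' Icc a (clamp t))).toReal := fun t => rfl
  have hηdiff : ∀ s t : ℝ, a ≤ s → s ≤ t → t ≤ b →
      η t - η s = (μH[1] (curveOf g '' Icc s t)).toReal := by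
    intro s t has hst htb
    rw [hηmem, hηmem, hclampid s ⟨has, hst.trans htb⟩, hclampid t ⟨has.trans hst, htb⟩,
      curve_additive hg has hst,
      ENNReal.toReal_add (piece_ne_top hg has) (piece_ne_top hg hst)]
    ring
  have hηle : ∀ s t : ℝ, s ≤ t → η t - η s ≤ (c:ℝ) * (t - s) ∧ 0 ≤ η t - η s := by
    intro s t hst
    have hcs := hclampmem s
    have hct := hclampmem t
    have hmono : clamp s ≤ clamp t := by
      rw [hclampdef]; dsimp only
      exact max_le_max_right _ (min_le_min_right _ hst)
    have hgap : clamp t - clamp s ≤ t - s := by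
      have h := hclamplip.dist_le_mul s t
      rw [Real.dist_eq, Real.dist_eq, NNReal.coe_one, one_mul] at h
      have h2 : |s - t| = t - s := by rw [abs_sub_comm]; exact abs_of_nonneg (by linarith)
      rw [h2] at h
      calc clamp t - clamp s ≤ |clamp t - clamp s| := le_abs_self _
        _ = |clamp s - clamp t| := abs_sub_comm _ _
        _ ≤ t - s := h
    have heq : η t - η s = (μH[1] (curveOf g '' Icc (clamp s) (clamp t))).toReal := by
      have h1 : η t = η (clamp t) := by
        rw [hηmem, hηmem, hclampid (clamp t) hct]
      have h2 : η s = η (clamp s) := by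
        rw [hηmem, hηmem, hclampid (clamp s) hcs]
      rw [h1, h2, hηdiff (clamp s) (clamp t) hcs.1 hmono hct.2]
    constructor
    · rw [heq]
      have hub := piece_upper hg hmono
      have := ENNReal.toReal_mono ENNReal.ofReal_ne_top hub
      rw [ENNReal.toReal_ofReal (mul_nonneg (Real.sqrt_nonneg _) (by linarith : (0:ℝ) ≤ clamp t - clamp s))] at this
      calc (μH[1] (curveOf g '' Icc (clamp s) (clamp t))).toReal
          ≤ Real.sqrt (1 + (K:ℝ)^2) * (clamp t - clamp s) := this
        _ ≤ (c:ℝ) * (t - s) := by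
            rw [hcge]
            exact mul_le_mul_of_nonneg_left hgap (Real.sqrt_nonneg _)
    · rw [heq]; exact ENNReal.toReal_nonneg
  have hηlip : LipschitzWith c η := by
    apply LipschitzWith.of_dist_le_mul
    intro s t
    rcases le_total s t with h | h
    · rw [Real.dist_eq, Real.dist_eq, abs_of_nonpos (by linarith [(hηle s t h).2]),
        abs_of_nonpos (by linarith : s - t ≤ 0)]
      have := (hηle s t h).1; linarith
    · rw [Real.dist_eq, Real.dist_eq, abs_of_nonneg (by linarith [(hηle t s h).2]),
        abs_of_nonneg (by linarith : 0 ≤ s - t)]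
      have := (hηle t s h).1; linarith
  -- pointwise derivative comparison
  have hptwise : ∀ t ∈ Ioo a b, DifferentiableAt ℝ g t → DifferentiableAt ℝ η t →
      Real.sqrt (1 + deriv g t ^ 2) ≤ deriv η t := by
    intro t ht hgt hηt
    set δ : ℕ → ℝ := fun n => ((n : ℝ) + 1)⁻¹ with hδ
    have hδpos : ∀ n, 0 < δ n := fun n => by positivity
    have hδ0 : Tendsto δ atTop (𝓝 0) :=
      Tendsto.inv_tendsto_atTop (tendsto_atTop_add_const_right _ 1 tendsto_natCast_atTop_atTop)
    have hδne : Tendsto δ atTop (𝓝[≠] 0) :=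
      tendsto_nhdsWithin_of_tendsto_nhds_of_eventually_within _ hδ0
        (Eventually.of_forall fun n => (hδpos n).ne')
    have s1 : Tendsto (fun n => (δ n)⁻¹ * (η (t + δ n) - η t)) atTop (𝓝 (deriv η t)) := by
      have := (hηt.hasDerivAt.tendsto_slope_zero).comp hδne
      simpa [Function.comp_def, smul_eq_mul] using this
    have sg : Tendsto (fun n => (δ n)⁻¹ * (g (t + δ n) - g t)) atTop (𝓝 (deriv g t)) := by
      have := (hgt.hasDerivAt.tendsto_slope_zero).comp hδne
      simpa [Function.comp_def, smul_eq_mul] using this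
    have s2 : Tendsto (fun n => Real.sqrt (1 + ((δ n)⁻¹ * (g (t + δ n) - g t)) ^ 2)) atTop
        (𝓝 (Real.sqrt (1 + deriv g t ^ 2))) := by
      apply Tendsto.comp (Continuous.tendsto Real.continuous_sqrt _)
      exact tendsto_const_nhds.add (sg.pow 2)
    have hev : ∀ᶠ n in atTop, Real.sqrt (1 + ((δ n)⁻¹ * (g (t + δ n) - g t)) ^ 2)
        ≤ (δ n)⁻¹ * (η (t + δ n) - η t) := by
      have hlt : ∀ᶠ n in atTop, δ n < b - t := hδ0.eventually_lt_const (by linarith [ht.2])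
      filter_upwards [hlt] with n hn
      have h1 : a ≤ t := ht.1.le
      have h2 : t ≤ t + δ n := by linarith [hδpos n]
      have h3 : t + δ n ≤ b := by linarith
      have hlow := piece_lower hg h2
      have hfin := piece_ne_top hg h2
      have hd : dist (curveOf g t) (curveOf g (t + δ n)) ≤ η (t + δ n) - η t := by
        rw [hηdiff t (t + δ n) h1 h2 h3]
        have := ENNReal.toReal_mono hfin hlow
        rwa [ENNReal.toReal_ofReal dist_nonneg] at this
      have hdeq : dist (curveOf g t) (curveOf g (t + δ n))
          = δ n * Real.sqrt (1 + ((δ n)⁻¹ * (g (t + δ n) - g t)) ^ 2) := by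
        rw [dist_curveOf]
        rw [show δ n * Real.sqrt (1 + ((δ n)⁻¹ * (g (t + δ n) - g t)) ^ 2)
            = Real.sqrt ((δ n)^2 * (1 + ((δ n)⁻¹ * (g (t + δ n) - g t)) ^ 2)) by
          rw [Real.sqrt_mul (by positivity), Real.sqrt_sq (hδpos n).le]]
        congr 1
        field_simp [(hδpos n).ne']
        ring
      rw [hdeq] at hd
      calc Real.sqrt (1 + ((δ n)⁻¹ * (g (t + δ n) - g t)) ^ 2)
          = (δ n)⁻¹ * (δ n * Real.sqrt (1 + ((δ n)⁻¹ * (g (t + δ n) - g t)) ^ 2)) := by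
            rw [inv_mul_cancel_left₀ (hδpos n).ne']
        _ ≤ (δ n)⁻¹ * (η (t + δ n) - η t) :=
            mul_le_mul_of_nonneg_left hd (le_of_lt (inv_pos.2 (hδpos n)))
    exact le_of_tendsto_of_tendsto s2 s1 hev
  -- integrate
  have hae : ∀ᵐ x ∂(volume.restrict (Icc a b)),
      Real.sqrt (1 + deriv g x ^ 2) ≤ deriv η x := by
    have h1 : ∀ᵐ x : ℝ, DifferentiableAt ℝ g x := hg.ae_differentiableAt_real
    have h2 : ∀ᵐ x : ℝ, DifferentiableAt ℝ η x := hηlip.ae_differentiableAt_real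
    have h3 : ∀ᵐ x : ℝ, x ≠ a ∧ x ≠ b := by
      have hz : volume ({a, b} : Set ℝ) = 0 :=
        Set.Finite.measure_zero (Set.toFinite _) volume
      filter_upwards [measure_eq_zero_iff_ae_notMem.1 hz] with x hx
      simp only [Set.mem_insert_iff, Set.mem_singleton_iff] at hx
      push_neg at hx
      exact hx
    have h4 : ∀ᵐ x ∂(volume.restrict (Icc a b)), x ∈ Icc a b :=
      ae_restrict_mem measurableSet_Icc
    filter_upwards [ae_restrict_of_ae h1, ae_restrict_of_ae h2, ae_restrict_of_ae h3, h4]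
      with x hx1 hx2 hx3 hx4
    exact hptwise x ⟨lt_of_le_of_ne hx4.1 (Ne.symm hx3.1), lt_of_le_of_ne hx4.2 hx3.2⟩ hx1 hx2
  have hint : (∫ x in a..b, Real.sqrt (1 + deriv g x ^ 2)) ≤ ∫ x in a..b, deriv η x :=
    intervalIntegral.integral_mono_ae_restrict hab (phi_integrable hg a b)
      (lipDerivIntegrable hηlip a b) hae
  have hftc : (∫ x in a..b, deriv η x) = η b - η a := lipFTC hηlip a b
  have hηa : η a = 0 := by
    rw [hηmem, hclampid a ⟨le_refl a, hab⟩, Icc_self, Set.image_singleton,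
      hausdorff_singleton_zero]
    rfl
  have hηb : η b = (μH[1] (curveOf g '' Icc a b)).toReal := by
    rw [hηmem, hclampid b ⟨hab, le_refl b⟩]
  calc ENNReal.ofReal (∫ x in a..b, Real.sqrt (1 + deriv g x ^ 2))
      ≤ ENNReal.ofReal ((μH[1] (curveOf g '' Icc a b)).toReal) := by
        apply ENNReal.ofReal_le_ofReal
        rw [hηa, sub_zero, hηb] at hftc
        linarith [hint, hftc.le, hftc.ge]
    _ = μH[1] (curveOf g '' Icc a b) := ENNReal.ofReal_toReal (piece_ne_top hg hab)

end Curve4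

/-- Length of the graph of a Lipschitz function. -/
theorem stmt4 (α : ℝ) (hα : 0 < α) (a b : ℝ) (hab : a ≤ b) (f : ℝ → ℝ)
    (hf : LipschitzOnWith α.toNNReal f (Set.Icc a b)) :
    μH[1] ((fun t => mk2 t (f t)) '' Set.Icc a b)
      = ENNReal.ofReal (∫ t in a..b, Real.sqrt (1 + (deriv f t) ^ 2)) ∧
    (∫ t in a..b, Real.sqrt (1 + (deriv f t) ^ 2)) ≤ Real.sqrt (1 + α ^ 2) * (b - a) := by
  classical
  set K := α.toNNReal with hK
  have hKα : (K : ℝ) = α := Real.coe_toNNReal α hα.le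
  set clamp : ℝ → ℝ := fun t => max (min t b) a with hclampdef
  have hclamplip : LipschitzWith 1 clamp := (LipschitzWith.id.min_const b).max_const a
  have hclampmem : ∀ t, clamp t ∈ Icc a b := fun t =>
    ⟨le_max_right _ _, max_le (min_le_right _ _) hab⟩
  have hclampid : ∀ t ∈ Icc a b, clamp t = t := fun t ht => by
    rw [hclampdef]; dsimp only; rw [min_eq_left ht.2, max_eq_left ht.1]
  set g : ℝ → ℝ := fun t => f (clamp t) with hgdef
  have hfg : ∀ t ∈ Icc a b, f t = g t := fun t ht => by
    rw [hgdef]; dsimp only; rw [hclampid t ht]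
  have hg : LipschitzWith K g := by
    apply LipschitzWith.of_dist_le_mul
    intro s t
    calc dist (g s) (g t) ≤ (K : ℝ) * dist (clamp s) (clamp t) :=
        hf.dist_le_mul _ (hclampmem s) _ (hclampmem t)
      _ ≤ (K : ℝ) * dist s t := by
          have h := hclamplip.dist_le_mul s t
          rw [NNReal.coe_one, one_mul] at h
          exact mul_le_mul_of_nonneg_left h (NNReal.coe_nonneg K)
  have himg : (fun t => mk2 t (f t)) '' Set.Icc a b = curveOf g '' Icc a b := by
    apply Set.image_congr
    intro x hx
    rw [show curveOf g x = mk2 x (g x) from rfl, hfg x hx]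
  have hint_eq : (∫ t in a..b, Real.sqrt (1 + deriv f t ^ 2))
      = ∫ t in a..b, Real.sqrt (1 + deriv g t ^ 2) := by
    apply intervalIntegral.integral_congr_ae
    have hz : volume ({a, b} : Set ℝ) = 0 :=
      Set.Finite.measure_zero (Set.toFinite _) volume
    filter_upwards [measure_eq_zero_iff_ae_notMem.1 hz] with x hx hxI
    simp only [Set.mem_insert_iff, Set.mem_singleton_iff] at hx
    push_neg at hx
    rw [Set.uIoc_of_le hab] at hxI
    have hxo : x ∈ Ioo a b := ⟨hxI.1, lt_of_le_of_ne hxI.2 hx.2⟩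
    have heq : f =ᶠ[nhds x] g := by
      filter_upwards [Icc_mem_nhds hxo.1 hxo.2] with y hy
      exact hfg y hy
    rw [heq.deriv_eq]
  constructor
  · rw [himg, hint_eq]
    exact le_antisymm (curve_measure_le hg hab) (curve_measure_ge hg hab)
  · rw [hint_eq]
    calc (∫ t in a..b, Real.sqrt (1 + deriv g t ^ 2))
        ≤ Real.sqrt (1 + (K:ℝ) ^ 2) * (b - a) := phi_integral_upper hg hab
      _ = Real.sqrt (1 + α ^ 2) * (b - a) := by rw [hKα]
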